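/- Let X be a partial groupoid. For each x ∈ X_n with matrix form (x_{ij}) and each arbitrary function φ : [m] → [n], there is a unique element φ^*x ∈ X_m whose matrix form is (x_{φ(k),φ(ℓ)})_{0 ≤ k,ℓ ≤ m}; these assignments define a symmetric set Z with Z_n = X_n whose restriction along J : Δ → Υ equals X. -/

import Mathlib

/-- A (skeletal) simplicial set: a contravariant functor on the simplex category,
with `obj n` the set of `n`-simplices and `map α` the action of an
order-preserving map `α : [m] → [n]`. -/
structure SSet' where
  obj : ℕ → Type
  map : ∀ {m n : ℕ}, (Fin (m + 1) →o Fin (n + 1)) → obj n → obj m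
  map_id : ∀ (n : ℕ) (x : obj n), map OrderHom.id x = x
  map_comp : ∀ {k m n : ℕ} (α : Fin (k + 1) →o Fin (m + 1)) (β : Fin (m + 1) →o Fin (n + 1))
      (x : obj n), map (β.comp α) x = map α (map β x)

/-- The order-preserving map `ρ_{ij} : [1] → [n]`, `0 ↦ i`, `1 ↦ j` (for `i ≤ j`). -/
def rho {n : ℕ} (i j : Fin (n + 1)) (h : i ≤ j) : Fin 2 →o Fin (n + 1) where
  toFun := ![i, j]
  monotone' := by
    intro a b hab
    fin_cases a <;> fin_cases b <;> simp_all

/-- The `k`-th edge `ρ_{k,k+1}^*(x)` of an `n`-simplex. -/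
def SSet'.edge (X : SSet') {n : ℕ} (x : X.obj n) (k : Fin n) : X.obj 1 :=
  X.map (rho k.castSucc k.succ (Fin.castSucc_lt_succ (i := k)).le) x

/-- A simplicial set is edgy if each simplex is determined by its string of edges. -/
def SSet'.IsEdgy (X : SSet') : Prop :=
  ∀ n : ℕ, 1 ≤ n → Function.Injective fun (x : X.obj n) (k : Fin n) => X.edge x k

/-- Conjugation of an order-preserving map by the flips `τ`. -/
def conj {m n : ℕ} (α : Fin (m + 1) →o Fin (n + 1)) : Fin (m + 1) →o Fin (n + 1) where
  toFun k := (α k.rev).rev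
  monotone' := by
    intro a b hab
    exact Fin.rev_le_rev.mpr (α.monotone (Fin.rev_le_rev.mpr hab))

/-- An anti-involution on a simplicial set `X`, i.e. a simplicial map
`ν : X^op → X` with `ν^op ∘ ν = id`, described levelwise.  Naturality of
`ν : X^op → X` amounts to `ν (X(τ∘α∘τ) x) = X(α) (ν x)`. -/
structure AntiInvolution (X : SSet') where
  app : ∀ n : ℕ, X.obj n → X.obj n
  naturality : ∀ {m n : ℕ} (α : Fin (m + 1) →o Fin (n + 1)) (x : X.obj n),
    app m (X.map (conj α) x) = X.map α (app n x)
  involutive : ∀ (n : ℕ) (x : X.obj n), app n (app n x) = x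

/-- The constant map `[1] → [n]` at the last vertex, i.e. `s_0 ∘ (d_0)^n`. -/
def lastConst (n : ℕ) : Fin 2 →o Fin (n + 1) := ⟨fun _ => Fin.last n, monotone_const⟩

/-- `LSpec X ν x y` says that `y ∈ X_{2n}` has the edge string
`[f_n† | ⋯ | f_1† | f_1 | ⋯ | f_n]`, where `[f_1 | ⋯ | f_n]` is the edge string of
`x ∈ X_n`, and that the total composite `ρ_{0,2n}^*(y)` is the identity
`s_0(d_0^n x)` on the last vertex of `x`. -/
def LSpec (X : SSet') (ν : AntiInvolution X) {n : ℕ} (x : X.obj n) (y : X.obj (n + n)) : Prop :=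
  (∀ k : Fin (n + n), X.edge y k =
      if h : (k : ℕ) < n then ν.app 1 (X.edge x ⟨n - 1 - (k : ℕ), by omega⟩)
      else X.edge x ⟨(k : ℕ) - n, by have := k.isLt; omega⟩) ∧
  X.map (rho 0 (Fin.last (n + n)) (Fin.zero_le _)) y = X.map (lastConst n) x

/-- A partial groupoid structure on a simplicial set: it is edgy, has an
anti-involution which is the identity on vertices, and has operators
`L : X_n → X_{2n}` with `L[f_1|⋯|f_n] = [f_n†|⋯|f_1†|f_1|⋯|f_n]` whose total
composite is an identity. -/
structure PartialGroupoidStruct (X : SSet') where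
  edgy : X.IsEdgy
  inv : AntiInvolution X
  inv_zero : ∀ x : X.obj 0, inv.app 0 x = x
  L : ∀ {n : ℕ}, X.obj n → X.obj (n + n)
  L_spec : ∀ {n : ℕ}, 1 ≤ n → ∀ x : X.obj n, LSpec X inv x (L x)

/-- The Prop-valued version: `X` together with the anti-involution `ν` is a
partial groupoid. -/
def IsPartialGroupoid (X : SSet') (ν : AntiInvolution X) : Prop :=
  X.IsEdgy ∧ (∀ v : X.obj 0, ν.app 0 v = v) ∧
    ∀ n : ℕ, 1 ≤ n → ∀ x : X.obj n, ∃ y : X.obj (n + n), LSpec X ν x y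

/-- The matrix form of an `n`-simplex: `x_{ij} = ρ_{ij}^*(x)` for `i ≤ j`, and
`x_{ji} = (x_{ij})†`. -/
def matrixForm (X : SSet') (ν : AntiInvolution X) {n : ℕ} (x : X.obj n) (i j : Fin (n + 1)) :
    X.obj 1 :=
  if h : i ≤ j then X.map (rho i j h) x
  else ν.app 1 (X.map (rho j i (le_of_not_ge h)) x)

/-- The fold map `χ_n : [2n] → [n]`, `i ↦ |n - i|`. -/
def chi (n : ℕ) (i : Fin (n + n + 1)) : Fin (n + 1) :=
  ⟨max n (i : ℕ) - min n (i : ℕ), by have := i.isLt; omega⟩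

/-- A map of simplicial sets. -/
structure SSetHom (X Y : SSet') where
  app : ∀ n : ℕ, X.obj n → Y.obj n
  naturality : ∀ {m n : ℕ} (α : Fin (m + 1) →o Fin (n + 1)) (x : X.obj n),
    app m (X.map α x) = Y.map α (app n x)


section Aux

variable {X : SSet'} (P : PartialGroupoidStruct X)

lemma comp_rho {m n : ℕ} (β : Fin (m + 1) →o Fin (n + 1)) (i j : Fin (m + 1)) (h : i ≤ j) :
    β.comp (rho i j h) = rho (β i) (β j) (β.monotone h) := by
  ext t
  fin_cases t <;> simp [rho] <;> rfl

lemma map_rho_map {m n : ℕ} (β : Fin (m + 1) →o Fin (n + 1)) (x : X.obj n)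
    (i j : Fin (m + 1)) (h : i ≤ j) :
    X.map (rho i j h) (X.map β x) = X.map (rho (β i) (β j) (β.monotone h)) x := by
  rw [← X.map_comp, comp_rho]

lemma matrixForm_of_le {n : ℕ} (x : X.obj n) {i j : Fin (n + 1)} (h : i ≤ j) :
    matrixForm X P.inv x i j = X.map (rho i j h) x := dif_pos h

/-- ν fixes degenerate edges. -/
lemma nu_map_rho_self {n : ℕ} (x : X.obj n) (i : Fin (n + 1)) :
    P.inv.app 1 (X.map (rho i i le_rfl) x) = X.map (rho i i le_rfl) x := by
  have hfac : rho i i le_rfl =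
      (⟨fun _ => i, monotone_const⟩ : Fin 1 →o Fin (n + 1)).comp
        (⟨fun _ => 0, monotone_const⟩ : Fin 2 →o Fin 1) := by
    ext t; fin_cases t <;> simp [rho] <;> rfl
  have hconj : conj (⟨fun _ => 0, monotone_const⟩ : Fin 2 →o Fin 1) =
      (⟨fun _ => 0, monotone_const⟩ : Fin 2 →o Fin 1) := by
    ext t; simp [conj]
  rw [hfac, X.map_comp]
  set z := X.map (⟨fun _ => i, monotone_const⟩ : Fin 1 →o Fin (n + 1)) x with hz
  calc P.inv.app 1 (X.map (⟨fun _ => 0, monotone_const⟩ : Fin 2 →o Fin 1) z)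
      = P.inv.app 1 (X.map (conj (⟨fun _ => 0, monotone_const⟩ : Fin 2 →o Fin 1)) z) := by
        rw [hconj]
    _ = X.map (⟨fun _ => 0, monotone_const⟩ : Fin 2 →o Fin 1) (P.inv.app 0 z) :=
        P.inv.naturality _ z
    _ = X.map (⟨fun _ => 0, monotone_const⟩ : Fin 2 →o Fin 1) z := by rw [P.inv_zero]

lemma nu_map_rho {n : ℕ} (x : X.obj n) {i j : Fin (n + 1)} (h : i ≤ j) :
    P.inv.app 1 (X.map (rho i j h) x) = matrixForm X P.inv x j i := by
  rcases eq_or_lt_of_le h with rfl | hlt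
  · rw [matrixForm_of_le P x le_rfl, nu_map_rho_self]
  · unfold matrixForm
    rw [dif_neg (not_le.mpr hlt)]

lemma nu_matrixForm {n : ℕ} (x : X.obj n) (i j : Fin (n + 1)) :
    P.inv.app 1 (matrixForm X P.inv x i j) = matrixForm X P.inv x j i := by
  rcases le_or_gt i j with h | h
  · rw [matrixForm_of_le P x h, nu_map_rho]
  · have hji : j ≤ i := h.le
    rw [matrixForm_of_le P x hji]
    unfold matrixForm
    rw [dif_neg (not_le.mpr h), P.inv.involutive]

lemma matrixForm_nu_symm {n : ℕ} (x : X.obj n) (i j : Fin (n + 1)) :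
    matrixForm X P.inv x i j = P.inv.app 1 (matrixForm X P.inv x j i) := by
  rw [nu_matrixForm]

/-- G1: the matrix form of `X(α) x` is `(x_{α k, α l})`. -/
lemma matrixForm_map {m n : ℕ} (α : Fin (m + 1) →o Fin (n + 1)) (x : X.obj n)
    (k l : Fin (m + 1)) :
    matrixForm X P.inv (X.map α x) k l = matrixForm X P.inv x (α k) (α l) := by
  rcases le_or_gt k l with h | h
  · rw [matrixForm_of_le P _ h, matrixForm_of_le P x (α.monotone h), map_rho_map]
  · have hlk : l ≤ k := h.le
    calc matrixForm X P.inv (X.map α x) k l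
        = P.inv.app 1 (matrixForm X P.inv (X.map α x) l k) := matrixForm_nu_symm P _ _ _
      _ = P.inv.app 1 (X.map (rho l k hlk) (X.map α x)) := by rw [matrixForm_of_le P _ hlk]
      _ = P.inv.app 1 (X.map (rho (α l) (α k) (α.monotone hlk)) x) := by rw [map_rho_map]
      _ = matrixForm X P.inv x (α k) (α l) := nu_map_rho P x _
lemma conj_rho {n : ℕ} (i j : Fin (n + 1)) (h : i ≤ j) :
    conj (rho i j h) = rho j.rev i.rev (Fin.rev_le_rev.mpr h) := by
  ext t
  fin_cases t <;> rfl

/-- G2: the matrix form of `ν x` is `(x_{rev k, rev l})`. -/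
lemma matrixForm_inv {n : ℕ} (x : X.obj n) (k l : Fin (n + 1)) :
    matrixForm X P.inv (P.inv.app n x) k l = matrixForm X P.inv x k.rev l.rev := by
  rcases le_or_gt k l with h | h
  · have h' : l.rev ≤ k.rev := Fin.rev_le_rev.mpr h
    calc matrixForm X P.inv (P.inv.app n x) k l
        = X.map (rho k l h) (P.inv.app n x) := matrixForm_of_le P _ h
      _ = P.inv.app 1 (X.map (conj (rho k l h)) x) := (P.inv.naturality _ x).symm
      _ = P.inv.app 1 (X.map (rho l.rev k.rev h') x) := by rw [conj_rho]
      _ = matrixForm X P.inv x k.rev l.rev := nu_map_rho P x h'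
  · have h' : l ≤ k := h.le
    have h'' : k.rev ≤ l.rev := Fin.rev_le_rev.mpr h'
    calc matrixForm X P.inv (P.inv.app n x) k l
        = P.inv.app 1 (matrixForm X P.inv (P.inv.app n x) l k) := matrixForm_nu_symm P _ _ _
      _ = P.inv.app 1 (X.map (rho l k h') (P.inv.app n x)) := by rw [matrixForm_of_le P _ h']
      _ = P.inv.app 1 (P.inv.app 1 (X.map (conj (rho l k h')) x)) := by
          rw [P.inv.naturality _ x]
      _ = X.map (conj (rho l k h')) x := P.inv.involutive 1 _
      _ = X.map (rho k.rev l.rev h'') x := by rw [conj_rho]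
      _ = matrixForm X P.inv x k.rev l.rev := (matrixForm_of_le P x h'').symm

lemma edge_eq_matrixForm {n : ℕ} (y : X.obj n) (k : Fin n) :
    X.edge y k = matrixForm X P.inv y k.castSucc k.succ :=
  (matrixForm_of_le P y (Fin.castSucc_lt_succ (i := k)).le).symm

lemma matrixForm_consec {N : ℕ} (y : X.obj N) {i j : Fin (N + 1)} (c : Fin N)
    (hi : i = c.castSucc) (hj : j = c.succ) :
    matrixForm X P.inv y i j = X.edge y c := by
  subst hi; subst hj
  exact (edge_eq_matrixForm P y c).symm

lemma matrixForm_congr {N : ℕ} (y : X.obj N) {i j i' j' : Fin (N + 1)}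
    (hi : i = i') (hj : j = j') :
    matrixForm X P.inv y i j = matrixForm X P.inv y i' j' := by rw [hi, hj]

include P in
lemma eq_of_edges {m : ℕ} (hm : 1 ≤ m) {y y' : X.obj m}
    (h : ∀ k : Fin m, X.edge y k = X.edge y' k) : y = y' :=
  P.edgy m hm (funext h)

/-- Any two simplices with the same matrix form are equal. -/
lemma ext_matrixForm :
    ∀ {m : ℕ} {y y' : X.obj m},
      (∀ k l : Fin (m + 1), matrixForm X P.inv y k l = matrixForm X P.inv y' k l) → y = y'
  | 0, y, y', h => by
    have h00 : X.map (rho (0 : Fin 1) 0 le_rfl) y = X.map (rho (0 : Fin 1) 0 le_rfl) y' := by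
      have := h 0 0
      rwa [matrixForm_of_le P y le_rfl, matrixForm_of_le P y' le_rfl] at this
    have hid : (rho (0 : Fin 1) 0 le_rfl).comp (⟨fun _ => 0, monotone_const⟩ : Fin 1 →o Fin 2)
        = OrderHom.id := by
      ext t
      have ht : t = 0 := Subsingleton.elim (α := Fin 1) t 0
      subst ht; rfl
    calc y = X.map OrderHom.id y := (X.map_id 0 y).symm
      _ = X.map (⟨fun _ => 0, monotone_const⟩ : Fin 1 →o Fin 2)
            (X.map (rho (0 : Fin 1) 0 le_rfl) y) := by rw [← X.map_comp, hid]
      _ = X.map (⟨fun _ => 0, monotone_const⟩ : Fin 1 →o Fin 2)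
            (X.map (rho (0 : Fin 1) 0 le_rfl) y') := by rw [h00]
      _ = X.map OrderHom.id y' := by rw [← X.map_comp, hid]
      _ = y' := X.map_id 0 y'
  | (m + 1), y, y', h =>
    eq_of_edges P (Nat.succ_le_succ (Nat.zero_le m)) fun k => by
      rw [edge_eq_matrixForm P y k, edge_eq_matrixForm P y' k]
      exact h _ _
def frontIncl (n : ℕ) : Fin (n + 1) →o Fin (n + n + 1) :=
  ⟨fun t => ⟨t.val, by omega⟩, fun a b h => h⟩

def backIncl (n : ℕ) : Fin (n + 1) →o Fin (n + n + 1) :=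
  ⟨fun t => ⟨t.val + n, by omega⟩, fun a b h => by
    simp only [Fin.mk_le_mk]
    have : a.val ≤ b.val := h
    omega⟩

lemma back_L {n : ℕ} (hn : 1 ≤ n) (x : X.obj n) :
    X.map (backIncl n) (P.L x) = x := by
  apply eq_of_edges P hn
  intro k
  rw [edge_eq_matrixForm P, matrixForm_map P,
    matrixForm_consec P (P.L x) (⟨k.val + n, by omega⟩ : Fin (n + n))
      (by ext; rfl)
      (by ext; show k.succ.val + n = k.val + n + 1; simp only [Fin.val_succ]; omega),
    (P.L_spec hn x).1, dif_neg (by simp)]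
  congr 1
  ext
  simp
lemma front_L {n : ℕ} (hn : 1 ≤ n) (x : X.obj n) :
    X.map (frontIncl n) (P.L x) = P.inv.app n x := by
  apply eq_of_edges P hn
  intro k
  have hk := k.isLt
  rw [edge_eq_matrixForm P, matrixForm_map P,
    matrixForm_consec P (P.L x) (⟨k.val, by omega⟩ : Fin (n + n))
      (by ext; rfl)
      (by ext; rfl),
    (P.L_spec hn x).1, dif_pos (by simp only [Fin.mk_lt_mk] at hk ⊢; omega)]
  rw [edge_eq_matrixForm P (P.inv.app n x) k, matrixForm_inv P,
    matrixForm_nu_symm P x,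
    matrixForm_consec P x (⟨n - 1 - k.val, by omega⟩ : Fin n)
      (by ext; simp only [Fin.val_rev, Fin.coe_castSucc, Fin.val_succ]; omega)
      (by ext; simp only [Fin.val_rev, Fin.coe_castSucc, Fin.val_succ]; omega)]
def tri {N : ℕ} (i j k : Fin (N + 1)) (h1 : i ≤ j) (h2 : j ≤ k) : Fin 3 →o Fin (N + 1) :=
  ⟨![i, j, k], by
    intro a b hab
    fin_cases a <;> fin_cases b <;>
      simp_all <;> first | exact h1 | exact h2 | exact h1.trans h2⟩

@[simp] lemma tri_apply_zero {N : ℕ} (i j k : Fin (N + 1)) (h1 h2) :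
    tri i j k h1 h2 0 = i := rfl
@[simp] lemma tri_apply_one {N : ℕ} (i j k : Fin (N + 1)) (h1 h2) :
    tri i j k h1 h2 1 = j := rfl
@[simp] lemma tri_apply_two {N : ℕ} (i j k : Fin (N + 1)) (h1 h2) :
    tri i j k h1 h2 2 = k := rfl

lemma edge_map {m N : ℕ} (α : Fin (m + 1) →o Fin (N + 1)) (y : X.obj N) (k : Fin m) :
    X.edge (X.map α y) k = matrixForm X P.inv y (α k.castSucc) (α k.succ) := by
  rw [edge_eq_matrixForm P, matrixForm_map P]

lemma matrixForm_val_consec {N : ℕ} (y : X.obj N) {i j : Fin (N + 1)} {c : ℕ} (hc : c < N)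
    (hi : i.val = c) (hj : j.val = c + 1) :
    matrixForm X P.inv y i j = X.edge y ⟨c, hc⟩ :=
  matrixForm_consec P y ⟨c, hc⟩ (by ext; simpa) (by ext; simpa)

lemma edge_congr' {N : ℕ} (y : X.obj N) {k k' : Fin N} (h : k.val = k'.val) :
    X.edge y k = X.edge y k' := by
  congr 1
  exact Fin.ext h

include P in
lemma edge_L_lt {n : ℕ} (hn : 1 ≤ n) (x : X.obj n) {k : Fin (n + n)} (hk : k.val < n) :
    X.edge (P.L x) k = P.inv.app 1 (X.edge x ⟨n - 1 - k.val, by omega⟩) := by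
  rw [(P.L_spec hn x).1 k, dif_pos hk]

include P in
lemma edge_L_ge {n : ℕ} (hn : 1 ≤ n) (x : X.obj n) {k : Fin (n + n)} (hk : ¬ k.val < n) :
    X.edge (P.L x) k = X.edge x ⟨k.val - n, by have := k.isLt; omega⟩ := by
  rw [(P.L_spec hn x).1 k, dif_neg hk]

lemma rho_01_id : rho (0 : Fin 2) 1 (by decide) = OrderHom.id := by
  ext t
  fin_cases t <;> rfl

lemma edge_self (b : X.obj 1) (k : Fin 1) : X.edge b k = b := by
  have : k = 0 := Subsingleton.elim (α := Fin 1) k 0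
  subst this
  show X.map (rho (0 : Fin 1).castSucc (0 : Fin 1).succ _) b = b
  have h : rho (0 : Fin 1).castSucc (0 : Fin 1).succ (Fin.castSucc_lt_succ (i := (0 : Fin 1))).le
      = OrderHom.id := by
    ext t; fin_cases t <;> rfl
  rw [h, X.map_id]
lemma map_rho_congr {N : ℕ} (y : X.obj N) {i j i' j' : Fin (N + 1)} (h : i ≤ j) (h' : i' ≤ j')
    (hi : i = i') (hj : j = j') : X.map (rho i j h) y = X.map (rho i' j' h') y := by
  subst hi; subst hj; rfl

include P in
lemma edge_Lb_zero (b : X.obj 1) {k : Fin (1 + 1)} (hk : k.val = 0) :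
    X.edge (P.L b) k = P.inv.app 1 b := by
  rw [edge_L_lt P le_rfl b (by omega), edge_self]

include P in
lemma edge_Lb_one (b : X.obj 1) {k : Fin (1 + 1)} (hk : k.val = 1) :
    X.edge (P.L b) k = b := by
  rw [edge_L_ge P le_rfl b (by omega), edge_self]

include P in
lemma edge_Lp0 (p : X.obj 2) {k : Fin (2 + 2)} (hk : k.val = 0) :
    X.edge (P.L p) k = P.inv.app 1 (X.edge p 1) := by
  rw [edge_L_lt P (by norm_num) p (by omega)]
  exact congrArg _ (edge_congr' p (by simp; omega))

include P in
lemma edge_Lp1 (p : X.obj 2) {k : Fin (2 + 2)} (hk : k.val = 1) :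
    X.edge (P.L p) k = P.inv.app 1 (X.edge p 0) := by
  rw [edge_L_lt P (by norm_num) p (by omega)]
  exact congrArg _ (edge_congr' p (by simp; omega))

include P in
lemma edge_Lp2 (p : X.obj 2) {k : Fin (2 + 2)} (hk : k.val = 2) :
    X.edge (P.L p) k = X.edge p 0 := by
  rw [edge_L_ge P (by norm_num) p (by omega)]
  exact edge_congr' p (by simp; omega)

include P in
lemma edge_Lp3 (p : X.obj 2) {k : Fin (2 + 2)} (hk : k.val = 3) :
    X.edge (P.L p) k = X.edge p 1 := by
  rw [edge_L_ge P (by norm_num) p (by omega)]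
  exact edge_congr' p (by simp; omega)

/-- `ρ_{1,3}^*(L p) = p_{11}` (an identity edge). -/
lemma L13 (p : X.obj 2) :
    X.map (rho (1 : Fin 5) 3 (by decide)) (P.L p) = X.map (rho (1 : Fin 3) 1 le_rfl) p := by
  have hb : X.map (tri (1 : Fin 5) 2 3 (by decide) (by decide)) (P.L p) = P.L (X.edge p 0) := by
    apply eq_of_edges P (by norm_num)
    intro k
    fin_cases k
    · rw [edge_map P, matrixForm_val_consec P (P.L p) (c := 1) (by norm_num) rfl rfl,
        edge_Lp1 P p rfl, edge_Lb_zero P _ rfl]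
    · rw [edge_map P, matrixForm_val_consec P (P.L p) (c := 2) (by norm_num) rfl rfl,
        edge_Lp2 P p rfl, edge_Lb_one P _ rfl]
  calc X.map (rho (1 : Fin 5) 3 (by decide)) (P.L p)
      = X.map (rho (tri (1 : Fin 5) 2 3 (by decide) (by decide) 0)
          (tri (1 : Fin 5) 2 3 (by decide) (by decide) 2)
          ((tri (1 : Fin 5) 2 3 (by decide) (by decide)).monotone (by decide))) (P.L p) :=
        map_rho_congr _ _ _ rfl rfl
    _ = X.map (rho (0 : Fin 3) 2 (by decide))
          (X.map (tri (1 : Fin 5) 2 3 (by decide) (by decide)) (P.L p)) :=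
        (map_rho_map _ _ _ _ _).symm
    _ = X.map (rho (0 : Fin 3) 2 (by decide)) (P.L (X.edge p 0)) := by rw [hb]
    _ = X.map (rho 0 (Fin.last (1 + 1)) (Fin.zero_le _)) (P.L (X.edge p 0)) :=
        map_rho_congr _ _ _ rfl (by ext; rfl)
    _ = X.map (lastConst 1) (X.edge p 0) := (P.L_spec le_rfl (X.edge p 0)).2
    _ = X.map (lastConst 1) (X.map (rho (0 : Fin 3) 1 (by decide)) p) := by
        unfold SSet'.edge
        rw [map_rho_congr (i' := (0 : Fin 3)) (j' := (1 : Fin 3)) p _ (by decide) (by ext; rfl) (by ext; rfl)]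
    _ = X.map ((rho (0 : Fin 3) 1 (by decide)).comp (lastConst 1)) p := (X.map_comp _ _ p).symm
    _ = X.map (rho (1 : Fin 3) 1 le_rfl) p := by
        rw [show (rho (0 : Fin 3) 1 (by decide)).comp (lastConst 1)
            = rho (1 : Fin 3) 1 le_rfl from by ext t; fin_cases t <;> rfl]
/-- Atom E2: `ρ_{1,4}^*(L p) = p_{12}`. -/
lemma atom2 (p : X.obj 2) :
    X.map (rho (1 : Fin 5) 4 (by decide)) (P.L p) = X.map (rho (1 : Fin 3) 2 (by decide)) p := by
  have hc : X.edge p 1 = X.map (rho (1 : Fin 3) 2 (by decide)) p := by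
    unfold SSet'.edge
    exact map_rho_congr p _ (by decide) (by ext; rfl) (by ext; rfl)
  have h134 : X.map (tri (1 : Fin 5) 3 4 (by decide) (by decide)) (P.L p)
      = X.map (tri (0 : Fin 2) 0 1 le_rfl (by decide)) (X.edge p 1) := by
    apply eq_of_edges P (by norm_num)
    intro k
    fin_cases k
    · -- LHS edge 0 : M (Lp) 1 3 ; RHS edge 0 : M c 0 0
      rw [edge_map P, edge_map P, matrixForm_of_le P _ (by decide),
        matrixForm_of_le P _ (by decide),
        map_rho_congr (i' := (1 : Fin 5)) (j' := (3 : Fin 5)) (P.L p) _ (by decide)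
          (by ext; rfl) (by ext; rfl),
        L13 P p,
        map_rho_congr (i' := (0 : Fin 2)) (j' := (0 : Fin 2)) (X.edge p 1) _ le_rfl
          (by ext; rfl) (by ext; rfl),
        hc, ← X.map_comp,
        show (rho (1 : Fin 3) 2 (by decide)).comp (rho (0 : Fin 2) 0 le_rfl)
          = rho (1 : Fin 3) 1 le_rfl from by ext t; fin_cases t <;> rfl]
    · -- LHS edge 1 : M (Lp) 3 4 ; RHS edge 1 : M c 0 1
      rw [edge_map P, edge_map P,
        matrixForm_val_consec P (P.L p) (c := 3) (by norm_num) rfl rfl,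
        edge_Lp3 P p rfl,
        matrixForm_val_consec P (X.edge p 1) (c := 0) (by norm_num) rfl rfl,
        edge_self]
  calc X.map (rho (1 : Fin 5) 4 (by decide)) (P.L p)
      = X.map (rho (tri (1 : Fin 5) 3 4 (by decide) (by decide) 0)
          (tri (1 : Fin 5) 3 4 (by decide) (by decide) 2)
          ((tri (1 : Fin 5) 3 4 (by decide) (by decide)).monotone (by decide))) (P.L p) :=
        map_rho_congr _ _ _ rfl rfl
    _ = X.map (rho (0 : Fin 3) 2 (by decide))
          (X.map (tri (1 : Fin 5) 3 4 (by decide) (by decide)) (P.L p)) :=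
        (map_rho_map _ _ _ _ _).symm
    _ = X.map (rho (0 : Fin 3) 2 (by decide))
          (X.map (tri (0 : Fin 2) 0 1 le_rfl (by decide)) (X.edge p 1)) := by rw [h134]
    _ = X.map (rho (tri (0 : Fin 2) 0 1 le_rfl (by decide) 0)
          (tri (0 : Fin 2) 0 1 le_rfl (by decide) 2)
          ((tri (0 : Fin 2) 0 1 le_rfl (by decide)).monotone (by decide))) (X.edge p 1) :=
        map_rho_map _ _ _ _ _
    _ = X.map OrderHom.id (X.edge p 1) := by
        rw [show rho (tri (0 : Fin 2) 0 1 le_rfl (by decide) 0)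
            (tri (0 : Fin 2) 0 1 le_rfl (by decide) 2)
            ((tri (0 : Fin 2) 0 1 le_rfl (by decide)).monotone (by decide))
            = OrderHom.id from by ext t; fin_cases t <;> rfl]
    _ = X.edge p 1 := X.map_id 1 _
    _ = X.map (rho (1 : Fin 3) 2 (by decide)) p := hc

/-- Atom E1: `ρ_{0,3}^*(L p) = ν(p_{12})`. -/
lemma atom1 (p : X.obj 2) :
    X.map (rho (0 : Fin 5) 3 (by decide)) (P.L p)
      = P.inv.app 1 (X.map (rho (1 : Fin 3) 2 (by decide)) p) := by
  have hc : X.edge p 1 = X.map (rho (1 : Fin 3) 2 (by decide)) p := by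
    unfold SSet'.edge
    exact map_rho_congr p _ (by decide) (by ext; rfl) (by ext; rfl)
  set c := X.map (rho (1 : Fin 3) 2 (by decide)) p with hcdef
  have h013 : X.map (tri (0 : Fin 5) 1 3 (by decide) (by decide)) (P.L p)
      = X.map (tri (0 : Fin 2) 1 1 (by decide) le_rfl) (P.inv.app 1 c) := by
    apply eq_of_edges P (by norm_num)
    intro k
    fin_cases k
    · -- LHS edge 0 : M (Lp) 0 1 = ν (edge p 1) ; RHS : M (νc) 0 1 = νc
      rw [edge_map P, edge_map P,
        matrixForm_val_consec P (P.L p) (c := 0) (by norm_num) rfl rfl,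
        edge_Lp0 P p rfl,
        matrixForm_val_consec P (P.inv.app 1 c) (c := 0) (by norm_num) rfl rfl,
        edge_self, hc]
    · -- LHS edge 1 : M (Lp) 1 3 = p_{11} ; RHS : M (νc) 1 1
      rw [edge_map P, edge_map P, matrixForm_of_le P _ (by decide),
        matrixForm_of_le P _ (by decide),
        map_rho_congr (i' := (1 : Fin 5)) (j' := (3 : Fin 5)) (P.L p) _ (by decide)
          (by ext; rfl) (by ext; rfl),
        L13 P p,
        map_rho_congr (i' := (1 : Fin 2)) (j' := (1 : Fin 2)) (P.inv.app 1 c) _ le_rfl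
          (by ext; rfl) (by ext; rfl)]
      -- goal : X.map (rho 1 1) p = X.map (rho (1:Fin 2) 1) (ν c)
      have hnat := (P.inv.naturality (rho (1 : Fin 2) 1 le_rfl) c).symm
      rw [hnat, conj_rho,
        map_rho_congr (i' := (0 : Fin 2)) (j' := (0 : Fin 2)) c _ le_rfl
          (by ext; rfl) (by ext; rfl),
        hcdef, ← X.map_comp,
        show (rho (1 : Fin 3) 2 (by decide)).comp (rho (0 : Fin 2) 0 le_rfl)
          = rho (1 : Fin 3) 1 le_rfl from by ext t; fin_cases t <;> rfl,
        nu_map_rho_self P p 1]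
  calc X.map (rho (0 : Fin 5) 3 (by decide)) (P.L p)
      = X.map (rho (tri (0 : Fin 5) 1 3 (by decide) (by decide) 0)
          (tri (0 : Fin 5) 1 3 (by decide) (by decide) 2)
          ((tri (0 : Fin 5) 1 3 (by decide) (by decide)).monotone (by decide))) (P.L p) :=
        map_rho_congr _ _ _ rfl rfl
    _ = X.map (rho (0 : Fin 3) 2 (by decide))
          (X.map (tri (0 : Fin 5) 1 3 (by decide) (by decide)) (P.L p)) :=
        (map_rho_map _ _ _ _ _).symm
    _ = X.map (rho (0 : Fin 3) 2 (by decide))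
          (X.map (tri (0 : Fin 2) 1 1 (by decide) le_rfl) (P.inv.app 1 c)) := by rw [h013]
    _ = X.map (rho (tri (0 : Fin 2) 1 1 (by decide) le_rfl 0)
          (tri (0 : Fin 2) 1 1 (by decide) le_rfl 2)
          ((tri (0 : Fin 2) 1 1 (by decide) le_rfl).monotone (by decide))) (P.inv.app 1 c) :=
        map_rho_map _ _ _ _ _
    _ = X.map OrderHom.id (P.inv.app 1 c) := by
        rw [show rho (tri (0 : Fin 2) 1 1 (by decide) le_rfl 0)
            (tri (0 : Fin 2) 1 1 (by decide) le_rfl 2)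
            ((tri (0 : Fin 2) 1 1 (by decide) le_rfl).monotone (by decide))
            = OrderHom.id from by ext t; fin_cases t <;> rfl]
    _ = P.inv.app 1 c := X.map_id 1 _
include P in
lemma matrixForm_L_front {n : ℕ} (hn : 1 ≤ n) (x : X.obj n) {i j : Fin (n + n + 1)}
    (h : i ≤ j) (hj : j.val ≤ n) :
    matrixForm X P.inv (P.L x) i j
      = matrixForm X P.inv x ⟨n - i.val, by omega⟩ ⟨n - j.val, by omega⟩ := by
  have hi' : i = frontIncl n ⟨i.val, by have : i.val ≤ j.val := h; omega⟩ := by ext; rfl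
  have hj' : j = frontIncl n ⟨j.val, by omega⟩ := by ext; rfl
  rw [matrixForm_congr P (P.L x) hi' hj', ← matrixForm_map P (frontIncl n), front_L P hn x,
    matrixForm_inv P]
  exact matrixForm_congr P x (by ext; simp [Fin.val_rev]) (by ext; simp [Fin.val_rev])

include P in
lemma matrixForm_L_back {n : ℕ} (hn : 1 ≤ n) (x : X.obj n) {i j : Fin (n + n + 1)}
    (h : i ≤ j) (hi : n ≤ i.val) :
    matrixForm X P.inv (P.L x) i j
      = matrixForm X P.inv x ⟨i.val - n, by have := i.isLt; omega⟩
          ⟨j.val - n, by have := j.isLt; omega⟩ := by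
  have hi' : i = backIncl n ⟨i.val - n, by have := i.isLt; omega⟩ := by
    ext; show i.val = (i.val - n) + n; omega
  have hj' : j = backIncl n ⟨j.val - n, by have := j.isLt; omega⟩ := by
    ext
    show j.val = (j.val - n) + n
    have : i.val ≤ j.val := h
    omega
  rw [matrixForm_congr P (P.L x) hi' hj', ← matrixForm_map P (backIncl n), back_L P hn x]
include P in
lemma atom2' (p : X.obj 2) :
    matrixForm X P.inv (P.L p) 1 4 = matrixForm X P.inv p 1 2 := by
  rw [matrixForm_of_le P _ (by decide), matrixForm_of_le P _ (by decide), atom2]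

include P in
lemma atom1' (p : X.obj 2) :
    matrixForm X P.inv (P.L p) 0 3 = matrixForm X P.inv p 2 1 := by
  rw [matrixForm_of_le P _ (by decide), atom1, nu_map_rho]

include P in
lemma L_face_front {n : ℕ} (hn : 1 ≤ n) (x : X.obj n) (u v : ℕ) (huv : u ≤ v) (hv : v ≤ n)
    {i j : Fin (n + n + 1)} (hi : i.val = u) (hj : j.val = v)
    {i' j' : Fin (n + 1)} (hi' : i'.val = n - u) (hj' : j'.val = n - v) :
    matrixForm X P.inv (P.L x) i j = matrixForm X P.inv x i' j' := by
  rw [matrixForm_L_front P hn x (by simp only [Fin.le_def]; omega) (by omega)]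
  exact matrixForm_congr P x (by ext; simp; omega) (by ext; simp; omega)

include P in
lemma L_face_back {n : ℕ} (hn : 1 ≤ n) (x : X.obj n) (u v : ℕ) (huv : u ≤ v) (hu : n ≤ u)
    (hv : v ≤ n + n) {i j : Fin (n + n + 1)} (hi : i.val = u) (hj : j.val = v)
    {i' j' : Fin (n + 1)} (hi' : i'.val = u - n) (hj' : j'.val = v - n) :
    matrixForm X P.inv (P.L x) i j = matrixForm X P.inv x i' j' := by
  rw [matrixForm_L_back P hn x (by simp only [Fin.le_def]; omega) (by omega)]
  exact matrixForm_congr P x (by ext; simp; omega) (by ext; simp; omega)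

/-- E2: `(Lw)_{m-a, 2m} = w_{a m}`. -/
lemma E2 {m : ℕ} (hm : 1 ≤ m) (w : X.obj m) {a : ℕ} (ha : a ≤ m) :
    matrixForm X P.inv (P.L w) ⟨m - a, by omega⟩ ⟨m + m, by omega⟩
      = matrixForm X P.inv w ⟨a, by omega⟩ ⟨m, by omega⟩ := by
  set p : X.obj 2 := X.map (tri (0 : Fin (m + 1)) ⟨a, by omega⟩ ⟨m, by omega⟩
    (by exact Fin.zero_le _) (by simp only [Fin.mk_le_mk]; omega)) w with hp
  have h124 : X.map (tri (⟨m - a, by omega⟩ : Fin (m + m + 1)) ⟨m, by omega⟩ ⟨m + m, by omega⟩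
        (by simp only [Fin.mk_le_mk]; omega) (by simp only [Fin.mk_le_mk]; omega)) (P.L w)
      = X.map (tri (1 : Fin 5) 2 4 (by decide) (by decide)) (P.L p) := by
    apply eq_of_edges P (by norm_num)
    intro k
    fin_cases k
    · rw [edge_map P, edge_map P,
        L_face_front P hm w (m - a) m (by omega) le_rfl rfl rfl
          (i' := ⟨m - (m - a), by omega⟩) (j' := ⟨0, by omega⟩) rfl (by simp),
        L_face_front P (by norm_num) p 1 2 (by norm_num) (by norm_num) rfl rfl
          (i' := ⟨1, by norm_num⟩) (j' := ⟨0, by norm_num⟩) rfl rfl,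
        hp, matrixForm_map P]
      exact matrixForm_congr P w (by ext; simp; omega) (by ext; simp)
    · rw [edge_map P, edge_map P,
        L_face_back P hm w m (m + m) (by omega) le_rfl le_rfl rfl rfl
          (i' := ⟨0, by omega⟩) (j' := ⟨m, by omega⟩) (by simp) (by simp),
        L_face_back P (by norm_num) p 2 4 (by norm_num) (by norm_num) (by norm_num) rfl rfl
          (i' := ⟨0, by norm_num⟩) (j' := ⟨2, by norm_num⟩) rfl rfl,
        hp, matrixForm_map P]
      exact matrixForm_congr P w (by ext; simp) (by ext; simp)
  calc matrixForm X P.inv (P.L w) ⟨m - a, by omega⟩ ⟨m + m, by omega⟩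
      = matrixForm X P.inv (X.map (tri (⟨m - a, by omega⟩ : Fin (m + m + 1)) ⟨m, by omega⟩
          ⟨m + m, by omega⟩ (by simp only [Fin.mk_le_mk]; omega) (by simp only [Fin.mk_le_mk]; omega))
          (P.L w)) 0 2 := by
        rw [matrixForm_map P]
        exact matrixForm_congr P (P.L w) (by ext; rfl) (by ext; rfl)
    _ = matrixForm X P.inv (X.map (tri (1 : Fin 5) 2 4 (by decide) (by decide)) (P.L p)) 0 2 := by
        rw [h124]
    _ = matrixForm X P.inv (P.L p) 1 4 := by
        rw [matrixForm_map P]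
        exact matrixForm_congr P (P.L p) (by ext; rfl) (by ext; rfl)
    _ = matrixForm X P.inv p 1 2 := atom2' P p
    _ = matrixForm X P.inv w ⟨a, by omega⟩ ⟨m, by omega⟩ := by
        rw [hp, matrixForm_map P]
        exact matrixForm_congr P w (by ext; rfl) (by ext; rfl)

/-- E1: `(Lw)_{0, m+b} = w_{m b}`. -/
lemma E1 {m : ℕ} (hm : 1 ≤ m) (w : X.obj m) {b : ℕ} (hb : b ≤ m) :
    matrixForm X P.inv (P.L w) ⟨0, by omega⟩ ⟨m + b, by omega⟩
      = matrixForm X P.inv w ⟨m, by omega⟩ ⟨b, by omega⟩ := by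
  set p : X.obj 2 := X.map (tri (0 : Fin (m + 1)) ⟨b, by omega⟩ ⟨m, by omega⟩
    (by exact Fin.zero_le _) (by simp only [Fin.mk_le_mk]; omega)) w with hp
  have h023 : X.map (tri (⟨0, by omega⟩ : Fin (m + m + 1)) ⟨m, by omega⟩ ⟨m + b, by omega⟩
        (by exact Fin.zero_le _) (by simp only [Fin.mk_le_mk]; omega)) (P.L w)
      = X.map (tri (0 : Fin 5) 2 3 (by decide) (by decide)) (P.L p) := by
    apply eq_of_edges P (by norm_num)
    intro k
    fin_cases k
    · rw [edge_map P, edge_map P,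
        L_face_front P hm w 0 m (by omega) le_rfl rfl rfl
          (i' := ⟨m, by omega⟩) (j' := ⟨0, by omega⟩) (by simp) (by simp),
        L_face_front P (by norm_num) p 0 2 (by norm_num) (by norm_num) rfl rfl
          (i' := ⟨2, by norm_num⟩) (j' := ⟨0, by norm_num⟩) rfl rfl,
        hp, matrixForm_map P]
      exact matrixForm_congr P w (by ext; simp) (by ext; simp)
    · rw [edge_map P, edge_map P,
        L_face_back P hm w m (m + b) (by omega) le_rfl (by omega) rfl rfl
          (i' := ⟨0, by omega⟩) (j' := ⟨b, by omega⟩) (by simp) (by simp),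
        L_face_back P (by norm_num) p 2 3 (by norm_num) (by norm_num) (by norm_num) rfl rfl
          (i' := ⟨0, by norm_num⟩) (j' := ⟨1, by norm_num⟩) rfl rfl,
        hp, matrixForm_map P]
      exact matrixForm_congr P w (by ext; simp) (by ext; simp)
  calc matrixForm X P.inv (P.L w) ⟨0, by omega⟩ ⟨m + b, by omega⟩
      = matrixForm X P.inv (X.map (tri (⟨0, by omega⟩ : Fin (m + m + 1)) ⟨m, by omega⟩
          ⟨m + b, by omega⟩ (by exact Fin.zero_le _) (by simp only [Fin.mk_le_mk]; omega))
          (P.L w)) 0 2 := by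
        rw [matrixForm_map P]
        exact matrixForm_congr P (P.L w) (by ext; rfl) (by ext; rfl)
    _ = matrixForm X P.inv (X.map (tri (0 : Fin 5) 2 3 (by decide) (by decide)) (P.L p)) 0 2 := by
        rw [h023]
    _ = matrixForm X P.inv (P.L p) 0 3 := by
        rw [matrixForm_map P]
        exact matrixForm_congr P (P.L p) (by ext; rfl) (by ext; rfl)
    _ = matrixForm X P.inv p 2 1 := atom1' P p
    _ = matrixForm X P.inv w ⟨m, by omega⟩ ⟨b, by omega⟩ := by
        rw [hp, matrixForm_map P]
        exact matrixForm_congr P w (by ext; rfl) (by ext; rfl)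
def ivl {N : ℕ} (s len : ℕ) (h : s + len ≤ N) : Fin (len + 1) →o Fin (N + 1) :=
  ⟨fun t => ⟨s + t.val, by have := t.isLt; omega⟩, fun u v huv => by
    simp only [Fin.mk_le_mk]
    have : u.val ≤ v.val := huv
    omega⟩

include P in
lemma edge_ivl {N len s : ℕ} (h : s + len ≤ N) (x : X.obj N) (t : Fin len) :
    X.edge (X.map (ivl s len h) x) t = X.edge x ⟨s + t.val, by omega⟩ := by
  rw [edge_map P, matrixForm_val_consec P x (c := s + t.val) (by omega) rfl rfl]

include P in
set_option maxHeartbeats 1000000 in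
lemma L_mixed {n : ℕ} (hn : 1 ≤ n) (x : X.obj n) (a b c : ℕ) (ha : a ≤ c) (hb : b ≤ c)
    (hcn : c ≤ n) (hab : 1 ≤ a + b) :
    matrixForm X P.inv (P.L x) ⟨n - a, by omega⟩ ⟨n + b, by omega⟩
      = matrixForm X P.inv (P.L (X.map (ivl 0 c (by omega)) x))
          ⟨c - a, by omega⟩ ⟨c + b, by omega⟩ := by
  have hc1 : 1 ≤ c := by omega
  set x' := X.map (ivl 0 c (by omega : 0 + c ≤ n)) x with hx'
  have hz : X.map (ivl (n - a) (a + b) (by omega)) (P.L x)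
      = X.map (ivl (c - a) (a + b) (by omega)) (P.L x') := by
    apply eq_of_edges P hab
    intro k
    have hk := k.isLt
    rw [edge_ivl P _ (P.L x) k, edge_ivl P _ (P.L x') k]
    by_cases hka : k.val < a
    · rw [edge_L_lt P hn x (show n - a + k.val < n by omega),
        edge_L_lt P hc1 x' (show c - a + k.val < c by omega), hx', edge_ivl P _ x _]
      exact congrArg _ (edge_congr' x
        (show n - 1 - (n - a + k.val) = 0 + (c - 1 - (c - a + k.val)) by omega))
    · rw [edge_L_ge P hn x (show ¬ (n - a + k.val < n) by omega),
        edge_L_ge P hc1 x' (show ¬ (c - a + k.val < c) by omega), hx', edge_ivl P _ x _]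
      exact edge_congr' x (show (n - a + k.val) - n = 0 + ((c - a + k.val) - c) by omega)
  calc matrixForm X P.inv (P.L x) ⟨n - a, by omega⟩ ⟨n + b, by omega⟩
      = matrixForm X P.inv (X.map (ivl (n - a) (a + b) (by omega)) (P.L x))
          ⟨0, by omega⟩ ⟨a + b, by omega⟩ := by
        rw [matrixForm_map P]
        exact matrixForm_congr P (P.L x) (by ext; show n - a = n - a + 0; omega)
          (by ext; show n + b = n - a + (a + b); omega)
    _ = matrixForm X P.inv (X.map (ivl (c - a) (a + b) (by omega)) (P.L x'))
          ⟨0, by omega⟩ ⟨a + b, by omega⟩ := by rw [hz]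
    _ = matrixForm X P.inv (P.L x') ⟨c - a, by omega⟩ ⟨c + b, by omega⟩ := by
        rw [matrixForm_map P]
        exact matrixForm_congr P (P.L x') (by ext; show c - a + 0 = c - a; omega)
          (by ext; show c - a + (a + b) = c + b; omega)

/-- G3: the matrix form of `L x` is `(x_{χ i, χ j})`. -/
lemma matrixForm_L {n : ℕ} (hn : 1 ≤ n) (x : X.obj n) (i j : Fin (n + n + 1)) :
    matrixForm X P.inv (P.L x) i j = matrixForm X P.inv x (chi n i) (chi n j) := by
  suffices H : ∀ i j : Fin (n + n + 1), i ≤ j →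
      matrixForm X P.inv (P.L x) i j = matrixForm X P.inv x (chi n i) (chi n j) by
    rcases le_or_gt i j with h | h
    · exact H i j h
    · rw [matrixForm_nu_symm P (P.L x) i j, H j i h.le, nu_matrixForm]
  intro i j hij
  have hij' : i.val ≤ j.val := hij
  have hjlt := j.isLt
  by_cases hj : j.val ≤ n
  · rw [matrixForm_L_front P hn x hij hj]
    exact matrixForm_congr P x (by ext; show n - i.val = max n i.val - min n i.val; omega)
      (by ext; show n - j.val = max n j.val - min n j.val; omega)
  by_cases hi : n ≤ i.val
  · rw [matrixForm_L_back P hn x hij hi]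
    exact matrixForm_congr P x (by ext; show i.val - n = max n i.val - min n i.val; omega)
      (by ext; show j.val - n = max n j.val - min n j.val; omega)
  push_neg at hj hi
  have h1 : matrixForm X P.inv (P.L x) i j
      = matrixForm X P.inv (P.L x) ⟨n - (n - i.val), by omega⟩ ⟨n + (j.val - n), by omega⟩ :=
    matrixForm_congr P (P.L x) (by ext; show i.val = n - (n - i.val); omega)
      (by ext; show j.val = n + (j.val - n); omega)
  rcases le_or_gt (n - i.val) (j.val - n) with hab | hab
  · rw [h1, L_mixed P hn x (n - i.val) (j.val - n) (j.val - n) hab le_rfl (by omega) (by omega)]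
    have hE := E2 P (m := j.val - n) (by omega)
      (X.map (ivl 0 (j.val - n) (by omega)) x) (a := n - i.val) hab
    rw [matrixForm_congr P _
        (show (⟨j.val - n - (n - i.val), by omega⟩ : Fin ((j.val-n) + (j.val-n) + 1))
          = ⟨(j.val - n) - (n - i.val), by omega⟩ from by ext; rfl)
        (show (⟨(j.val - n) + (j.val - n), by omega⟩ : Fin ((j.val-n) + (j.val-n) + 1))
          = ⟨(j.val - n) + (j.val - n), by omega⟩ from by ext; rfl), hE,
      matrixForm_map P]
    exact matrixForm_congr P x
      (by ext; show 0 + (n - i.val) = max n i.val - min n i.val; omega)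
      (by ext; show 0 + (j.val - n) = max n j.val - min n j.val; omega)
  · rw [h1, L_mixed P hn x (n - i.val) (j.val - n) (n - i.val) le_rfl (by omega) (by omega)
      (by omega)]
    have hE := E1 P (m := n - i.val) (by omega)
      (X.map (ivl 0 (n - i.val) (by omega)) x) (b := j.val - n) (by omega)
    rw [matrixForm_congr P _
        (show (⟨n - i.val - (n - i.val), by omega⟩ : Fin ((n-i.val) + (n-i.val) + 1))
          = ⟨0, by omega⟩ from by ext; show (n - i.val) - (n - i.val) = 0; omega)
        (show (⟨(n - i.val) + (j.val - n), by omega⟩ : Fin ((n-i.val) + (n-i.val) + 1))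
          = ⟨(n - i.val) + (j.val - n), by omega⟩ from by ext; rfl), hE,
      matrixForm_map P]
    exact matrixForm_congr P x
      (by ext; show 0 + (n - i.val) = max n i.val - min n i.val; omega)
      (by ext; show 0 + (j.val - n) = max n j.val - min n j.val; omega)
/-- `φ` is realizable: every simplex has a (unique) `φ`-pullback. -/
def Rea (m n : ℕ) (φ : Fin (m + 1) → Fin (n + 1)) : Prop :=
  ∀ x : X.obj n, ∃ y : X.obj m, ∀ k l : Fin (m + 1),
    matrixForm X P.inv y k l = matrixForm X P.inv x (φ k) (φ l)

variable {P}

lemma Rea.comp {k m n : ℕ} {φ : Fin (k + 1) → Fin (m + 1)} {ψ : Fin (m + 1) → Fin (n + 1)}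
    (hφ : Rea P k m φ) (hψ : Rea P m n ψ) : Rea P k n (ψ ∘ φ) := by
  intro x
  obtain ⟨y₁, hy₁⟩ := hψ x
  obtain ⟨y, hy⟩ := hφ y₁
  exact ⟨y, fun a b => by rw [hy, hy₁]; rfl⟩

lemma rea_congr {m n : ℕ} {φ φ' : Fin (m + 1) → Fin (n + 1)} (h : ∀ t, φ t = φ' t)
    (hφ : Rea P m n φ) : Rea P m n φ' := by
  intro x
  obtain ⟨y, hy⟩ := hφ x
  exact ⟨y, fun a b => by rw [hy, h, h]⟩

lemma rea_mono {m n : ℕ} (α : Fin (m + 1) →o Fin (n + 1)) : Rea P m n ⇑α :=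
  fun x => ⟨X.map α x, fun a b => matrixForm_map P α x a b⟩

lemma rea_of_monotone {m n : ℕ} {φ : Fin (m + 1) → Fin (n + 1)} (h : Monotone φ) :
    Rea P m n φ := rea_mono ⟨φ, h⟩

lemma rea_rev {n : ℕ} : Rea P n n Fin.rev :=
  fun x => ⟨P.inv.app n x, fun a b => matrixForm_inv P x a b⟩

lemma rea_chi {n : ℕ} (hn : 1 ≤ n) : Rea P (n + n) n (chi n) :=
  fun x => ⟨P.L x, fun a b => matrixForm_L P hn x a b⟩
/-- Reversal of the block `[i..j]` in `[m]`. -/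
def blockRev (m i j : ℕ) : Fin (m + 1) → Fin (m + 1) := fun t =>
  if h : i ≤ t.val ∧ t.val ≤ j ∧ j ≤ m then ⟨i + j - t.val, by omega⟩ else t

/-- The monotone map `[m] → [4m]` whose composite with two folds and two flips
is the block reversal. -/
def That (m i j : ℕ) (hij : i ≤ j) (hjm : j ≤ m) :
    Fin (m + 1) →o Fin ((m + m) + (m + m) + 1) :=
  ⟨fun t => ⟨if t.val < i then t.val else if t.val ≤ j then m + m - i - j + t.val
      else m + m + t.val, by have := t.isLt; split_ifs <;> omega⟩, by
    intro u v huv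
    have h1 : u.val ≤ v.val := huv
    have h2 := v.isLt
    simp only [Fin.mk_le_mk]
    split_ifs <;> omega⟩

lemma chi_val (n : ℕ) (v : Fin (n + n + 1)) :
    (chi n v).val = max n v.val - min n v.val := rfl

lemma rev_val {N : ℕ} (w : Fin (N + 1)) : w.rev.val = N - w.val := by
  rw [Fin.val_rev]; omega

lemma blockRev_eq (m i j : ℕ) (hij : i ≤ j) (hjm : j ≤ m) (t : Fin (m + 1)) :
    Fin.rev (chi m (Fin.rev (chi (m + m) (That m i j hij hjm t)))) = blockRev m i j t := by
  have ht := t.isLt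
  have e1 : (That m i j hij hjm t).val = if t.val < i then t.val else if t.val ≤ j
      then m + m - i - j + t.val else m + m + t.val := rfl
  ext
  rw [rev_val, chi_val, rev_val, chi_val, e1]
  show _ = (blockRev m i j t).val
  unfold blockRev
  by_cases hc : i ≤ t.val ∧ t.val ≤ j ∧ j ≤ m
  · rw [dif_pos hc]
    show _ = i + j - t.val
    split_ifs <;> omega
  · rw [dif_neg hc]
    split_ifs <;> omega

lemma rea_blockRev (m i j : ℕ) (hij : i ≤ j) (hjm : j ≤ m) (hm : 1 ≤ m) :
    Rea P m m (blockRev m i j) := by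
  have E1 := (rea_mono (P := P) (That m i j hij hjm)).comp (rea_chi (by omega : 1 ≤ m + m))
  have E2 := E1.comp (rea_rev (n := m + m))
  have E3 := E2.comp (rea_chi hm)
  have E4 := E3.comp (rea_rev (n := m))
  exact rea_congr (fun t => blockRev_eq m i j hij hjm t) E4

lemma rea_swap {m : ℕ} (a b : Fin (m + 1)) (hab : a < b) : Rea P m m ⇑(Equiv.swap a b) := by
  have hbv := b.isLt
  have habv : a.val < b.val := hab
  have hm : 1 ≤ m := by omega
  have h1 : Rea P m m (blockRev m a.val b.val) :=
    rea_blockRev _ _ _ (by omega) (by omega) hm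
  have h2 : Rea P m m (blockRev m (a.val + 1) (b.val - 1)) := by
    by_cases h : a.val + 1 ≤ b.val - 1
    · exact rea_blockRev _ _ _ h (by omega) hm
    · refine rea_congr (φ := id) ?_ (rea_of_monotone monotone_id)
      intro t
      unfold blockRev
      rw [dif_neg (by omega)]
      rfl
  refine rea_congr ?_ (h2.comp h1)
  intro t
  have htv := t.isLt
  show blockRev m a.val b.val (blockRev m (a.val + 1) (b.val - 1) t) = Equiv.swap a b t
  by_cases hta : t = a
  · rw [hta, Equiv.swap_apply_left]
    unfold blockRev
    rw [dif_neg (show ¬ (a.val + 1 ≤ a.val ∧ a.val ≤ b.val - 1 ∧ b.val - 1 ≤ m) by omega),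
      dif_pos (show a.val ≤ a.val ∧ a.val ≤ b.val ∧ b.val ≤ m by omega)]
    ext
    show a.val + b.val - a.val = b.val
    omega
  by_cases htb : t = b
  · rw [htb, Equiv.swap_apply_right]
    unfold blockRev
    rw [dif_neg (show ¬ (a.val + 1 ≤ b.val ∧ b.val ≤ b.val - 1 ∧ b.val - 1 ≤ m) by omega),
      dif_pos (show a.val ≤ b.val ∧ b.val ≤ b.val ∧ b.val ≤ m by omega)]
    ext
    show a.val + b.val - b.val = a.val
    omega
  · rw [Equiv.swap_apply_of_ne_of_ne hta htb]
    have htav : t.val ≠ a.val := fun h => hta (Fin.ext h)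
    have htbv : t.val ≠ b.val := fun h => htb (Fin.ext h)
    unfold blockRev
    by_cases hin : a.val + 1 ≤ t.val ∧ t.val ≤ b.val - 1 ∧ b.val - 1 ≤ m
    · rw [dif_pos hin,
        dif_pos (show a.val ≤ a.val + 1 + (b.val - 1) - t.val
          ∧ a.val + 1 + (b.val - 1) - t.val ≤ b.val ∧ b.val ≤ m by omega)]
      ext
      show a.val + b.val - (a.val + 1 + (b.val - 1) - t.val) = t.val
      omega
    · rw [dif_neg hin, dif_neg (show ¬ (a.val ≤ t.val ∧ t.val ≤ b.val ∧ b.val ≤ m) by omega)]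

lemma rea_perm {m : ℕ} (g : Equiv.Perm (Fin (m + 1))) : Rea P m m ⇑g := by
  refine Equiv.Perm.swap_induction_on g ?_ ?_
  · exact rea_congr (fun t => rfl) (rea_of_monotone (P := P) monotone_id)
  · intro f x y hxy hf
    have hs : Rea P m m ⇑(Equiv.swap x y) := by
      rcases lt_or_gt_of_ne hxy with h | h
      · exact rea_swap x y h
      · exact rea_congr (fun t => by rw [Equiv.swap_comm]) (rea_swap y x h)
    exact rea_congr (fun t => rfl) (hf.comp hs)

lemma rea_all {m n : ℕ} (φ : Fin (m + 1) → Fin (n + 1)) : Rea P m n φ := by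
  have h1 : Rea P m n (φ ∘ ⇑(Tuple.sort φ)) := rea_of_monotone (Tuple.monotone_sort φ)
  have h2 := (rea_perm (P := P) (Tuple.sort φ)⁻¹).comp h1
  exact rea_congr (fun t => by simp) h2

end Aux

/-- Let `X` be a partial groupoid.  For each `x ∈ X_n` with
matrix form `(x_{ij})` and each arbitrary function `φ : [m] → [n]`, there is a
unique element `φ^* x ∈ X_m` with matrix form `(x_{φ(k),φ(ℓ)})`; these
assignments define a symmetric set extending `X`, i.e. an action `F` of all
functions which is functorial, restricts to the given action of the
order-preserving maps, and acts on matrix forms by `(x_{ij}) ↦ (x_{φ(k),φ(ℓ)})`. -/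
theorem unique_symmetric_extension (X : SSet') (P : PartialGroupoidStruct X) :
    (∀ (m n : ℕ) (φ : Fin (m + 1) → Fin (n + 1)) (x : X.obj n),
      ∃! y : X.obj m, ∀ k l : Fin (m + 1),
        matrixForm X P.inv y k l = matrixForm X P.inv x (φ k) (φ l)) ∧
    ∃ F : ∀ (m n : ℕ), (Fin (m + 1) → Fin (n + 1)) → X.obj n → X.obj m,
      (∀ (n : ℕ) (x : X.obj n), F n n id x = x) ∧
      (∀ (k m n : ℕ) (φ : Fin (k + 1) → Fin (m + 1)) (ψ : Fin (m + 1) → Fin (n + 1))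
        (x : X.obj n), F k n (ψ ∘ φ) x = F k m φ (F m n ψ x)) ∧
      (∀ (m n : ℕ) (α : Fin (m + 1) →o Fin (n + 1)) (x : X.obj n),
        F m n (⇑α) x = X.map α x) ∧
      (∀ (m n : ℕ) (φ : Fin (m + 1) → Fin (n + 1)) (x : X.obj n) (k l : Fin (m + 1)),
        matrixForm X P.inv (F m n φ x) k l = matrixForm X P.inv x (φ k) (φ l)) := by
  constructor
  · intro m n φ x
    obtain ⟨y, hy⟩ := rea_all (P := P) φ x
    refine ⟨y, hy, ?_⟩
    intro y' hy'
    exact ext_matrixForm P fun k l => (hy' k l).trans (hy k l).symm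
  · refine ⟨fun m n φ x => Classical.choose (rea_all (P := P) φ x), ?_, ?_, ?_,
      fun m n φ x => Classical.choose_spec (rea_all (P := P) φ x)⟩
    · intro n x
      exact ext_matrixForm P fun k l => by
        rw [Classical.choose_spec (rea_all (P := P) id x) k l]
        rfl
    · intro k m n φ ψ x
      apply ext_matrixForm P
      intro a b
      rw [Classical.choose_spec (rea_all (P := P) (ψ ∘ φ) x) a b,
        Classical.choose_spec (rea_all (P := P) φ _) a b,
        Classical.choose_spec (rea_all (P := P) ψ x) (φ a) (φ b)]
      rfl
    · intro m n α x
      apply ext_matrixForm P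
      intro a b
      rw [Classical.choose_spec (rea_all (P := P) ⇑α x) a b, matrixForm_map P]
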